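/- Let H ∈ k⟦X⟧ have constant coefficient 0 and coefficient of X equal to 1, and let T ∈ k⟦X⟧ have constant coefficient 0 and coefficient of X equal to 1 with H∘T = T′·X; let T^{∘−1} denote the compositional inverse of T. Then a power series Φ of order 1 satisfies H∘Φ = Φ′·H if and only if there exists c ∈ k, c ≠ 0, such that Φ = T∘(c·X)∘T^{∘−1}. -/

import Mathlib

open PowerSeries

variable {k : Type*} [Field k] [CharZero k]

/-- Substitution of `g` (with zero constant coefficient) into `f`. -/
noncomputable def comp (f g : PowerSeries k) : PowerSeries k :=
  PowerSeries.mk fun m => ∑ n ∈ Finset.range (m + 1),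
    PowerSeries.coeff n f * PowerSeries.coeff m (g ^ n)

lemma coeff_derivativeFun' (f : PowerSeries k) (n : ℕ) :
    coeff n (derivativeFun f) = coeff (n + 1) f * (n + 1) := coeff_derivative f n

lemma derivativeFun_C' (r : k) : derivativeFun (C r : PowerSeries k) = 0 := derivative_C

lemma trunc_derivativeFun' (f : PowerSeries k) (n : ℕ) :
    trunc n (derivativeFun f) = Polynomial.derivative (trunc (n + 1) f) :=
  trunc_derivative f n

lemma constantCoeff_derivativeFun' (f : PowerSeries k) :
    constantCoeff (derivativeFun f) = coeff 1 f := by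
  rw [← coeff_zero_eq_constantCoeff_apply, coeff_derivativeFun']
  simp

lemma coeff_comp (f g : PowerSeries k) (m : ℕ) :
    coeff m (comp f g) = ∑ n ∈ Finset.range (m + 1),
      coeff n f * coeff m (g ^ n) := by
  simp [comp]

lemma coeff_pow_zero {g : PowerSeries k} (hg : constantCoeff g = 0)
    {m n : ℕ} (h : m < n) : coeff m (g ^ n) = 0 := by
  have hd : (X : PowerSeries k) ^ n ∣ g ^ n :=
    pow_dvd_pow_of_dvd (X_dvd_iff.mpr hg) n
  exact (PowerSeries.X_pow_dvd_iff.mp hd) m h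

lemma coeff_eval₂ {g : PowerSeries k} (hg : constantCoeff g = 0)
    (P : Polynomial k) (m : ℕ) :
    coeff m (P.eval₂ (C) g) = ∑ n ∈ Finset.range (m + 1),
      P.coeff n * coeff m (g ^ n) := by
  obtain ⟨N, hN, hNd⟩ : ∃ N, m < N ∧ P.natDegree < N :=
    ⟨max (m + 1) (P.natDegree + 1), by omega, by omega⟩
  rw [Polynomial.eval₂_eq_sum_range' _ hNd, map_sum]
  simp_rw [coeff_C_mul]
  refine (Finset.sum_subset (Finset.range_subset_range.mpr hN) ?_).symm
  intro n _ hn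
  rw [coeff_pow_zero hg (by simpa using hn), mul_zero]

lemma coeff_comp_eval {g : PowerSeries k} (hg : constantCoeff g = 0)
    (f : PowerSeries k) {m N : ℕ} (hm : m < N) :
    coeff m (comp f g) = coeff m ((trunc N f).eval₂ (C) g) := by
  rw [coeff_comp, coeff_eval₂ hg]
  refine Finset.sum_congr rfl fun n hn => ?_
  have hn' : n < N := by have := Finset.mem_range.mp hn; omega
  rw [PowerSeries.coeff_trunc, if_pos hn']

lemma comp_mul {g : PowerSeries k} (hg : constantCoeff g = 0)
    (f₁ f₂ : PowerSeries k) :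
    comp (f₁ * f₂) g = comp f₁ g * comp f₂ g := by
  ext m
  have h1 : m < m + 1 := Nat.lt_succ_self m
  rw [coeff_comp_eval hg (f₁ * f₂) h1]
  have hP : ∀ n, n ≤ m → ((trunc (m + 1) (f₁ * f₂)).coeff n
      = (trunc (m + 1) f₁ * trunc (m + 1) f₂).coeff n) := by
    intro n hn
    rw [PowerSeries.coeff_trunc, if_pos (by omega), PowerSeries.coeff_mul,
      Polynomial.coeff_mul]
    refine Finset.sum_congr rfl fun p hp => ?_
    have hp' := Finset.HasAntidiagonal.mem_antidiagonal.mp hp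
    rw [PowerSeries.coeff_trunc, if_pos (by omega), PowerSeries.coeff_trunc,
      if_pos (by omega)]
  have : coeff m ((trunc (m + 1) (f₁ * f₂)).eval₂ (C) g)
      = coeff m ((trunc (m + 1) f₁ * trunc (m + 1) f₂).eval₂ (C) g) := by
    rw [coeff_eval₂ hg, coeff_eval₂ hg]
    refine Finset.sum_congr rfl fun n hn => ?_
    rw [hP n (by simpa [Nat.lt_succ_iff] using hn)]
  rw [this, Polynomial.eval₂_mul, PowerSeries.coeff_mul, PowerSeries.coeff_mul]
  refine Finset.sum_congr rfl fun p hp => ?_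
  have hp' := Finset.HasAntidiagonal.mem_antidiagonal.mp hp
  rw [← coeff_comp_eval hg f₁ (show p.1 < m + 1 by omega),
    ← coeff_comp_eval hg f₂ (show p.2 < m + 1 by omega)]

lemma one_comp (g : PowerSeries k) : comp 1 g = 1 := by
  ext m
  rw [coeff_comp, Finset.sum_eq_single 0]
  · simp
  · intro n _ hn
    rw [PowerSeries.coeff_one, if_neg hn, zero_mul]
  · simp

lemma pow_comp {g : PowerSeries k} (hg : constantCoeff g = 0)
    (f : PowerSeries k) (n : ℕ) : comp (f ^ n) g = (comp f g) ^ n := by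
  induction n with
  | zero => simpa using one_comp g
  | succ n ih => rw [pow_succ, comp_mul hg, ih, pow_succ]

lemma comp_X_right (f : PowerSeries k) : comp f X = f := by
  ext m
  rw [coeff_comp, Finset.sum_eq_single m]
  · simp [coeff_X_pow]
  · intro n _ hn
    rw [coeff_X_pow, if_neg (fun h => hn h.symm), mul_zero]
  · intro h
    exact absurd (Finset.self_mem_range_succ m) h

lemma comp_X_left {g : PowerSeries k} (hg : constantCoeff g = 0) :
    comp X g = g := by
  ext m
  rw [coeff_comp]
  match m with
  | 0 =>
    simpa using hg.symm
  | (m + 1) =>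
    rw [Finset.sum_eq_single 1]
    · simp
    · intro n _ hn
      rw [PowerSeries.coeff_X, if_neg hn, zero_mul]
    · intro h
      exact absurd (Finset.mem_range.mpr (by omega)) h

lemma C_mul_comp (c : k) (f g : PowerSeries k) :
    comp (C c * f) g = C c * comp f g := by
  ext m
  rw [coeff_C_mul, coeff_comp, coeff_comp, Finset.mul_sum]
  exact Finset.sum_congr rfl fun n _ => by rw [coeff_C_mul, mul_assoc]

lemma comp_assoc {g h : PowerSeries k} (hg : constantCoeff g = 0)
    (hh : constantCoeff h = 0) (f : PowerSeries k) :
    comp (comp f g) h = comp f (comp g h) := by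
  ext m
  rw [coeff_comp, coeff_comp]
  have hRHS : ∀ n : ℕ, coeff m ((comp g h) ^ n)
      = ∑ j ∈ Finset.range (m + 1), coeff j (g ^ n) * coeff m (h ^ j) := by
    intro n
    rw [← pow_comp hh, coeff_comp]
  simp_rw [hRHS, coeff_comp, Finset.sum_mul, Finset.mul_sum]
  rw [Finset.sum_comm]
  refine Finset.sum_congr rfl fun j hj => ?_
  have hj' : j + 1 ≤ m + 1 := Finset.mem_range.mp hj
  rw [Finset.sum_subset (Finset.range_subset_range.mpr hj')]
  · exact Finset.sum_congr rfl fun n _ => by ring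
  · intro n _ hn
    rw [coeff_pow_zero hg (by simpa using hn), mul_zero, zero_mul]

lemma derivativeFun_pow (g : PowerSeries k) (n : ℕ) :
    derivativeFun (g ^ (n + 1))
      = ((n : PowerSeries k) + 1) * g ^ n * derivativeFun g := by
  induction n with
  | zero => simp
  | succ n ih =>
    rw [pow_succ, derivativeFun_mul, ih, smul_eq_mul, smul_eq_mul]
    push_cast
    ring

lemma derivativeFun_eval₂ (g : PowerSeries k) (P : Polynomial k) :
    derivativeFun (P.eval₂ (C) g)
      = (Polynomial.derivative P).eval₂ (C) g * derivativeFun g := by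
  induction P using Polynomial.induction_on with
  | C a => simp [derivativeFun_C']
  | add p q hp hq =>
    rw [Polynomial.eval₂_add, derivativeFun_add, hp, hq, map_add,
      Polynomial.eval₂_add, add_mul]
  | monomial n a ih =>
    rw [Polynomial.eval₂_mul, Polynomial.eval₂_C, Polynomial.eval₂_X_pow,
      derivativeFun_mul, derivativeFun_C', smul_zero, add_zero, smul_eq_mul,
      derivativeFun_pow]
    rw [Polynomial.derivative_mul, Polynomial.derivative_C, zero_mul, zero_add,
      Polynomial.derivative_X_pow, Polynomial.eval₂_mul, Polynomial.eval₂_C,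
      Polynomial.eval₂_mul, Polynomial.eval₂_C, Polynomial.eval₂_X_pow,
      Nat.add_sub_cancel]
    push_cast [map_natCast]
    rw [map_add, map_one, map_natCast]
    ring

lemma derivativeFun_comp {g : PowerSeries k} (hg : constantCoeff g = 0)
    (f : PowerSeries k) :
    derivativeFun (comp f g) = comp (derivativeFun f) g * derivativeFun g := by
  ext m
  rw [coeff_derivativeFun', coeff_comp_eval hg f (show m + 1 < m + 2 by omega),
    ← coeff_derivativeFun', derivativeFun_eval₂,
    ← trunc_derivativeFun' f (m + 1)]
  rw [PowerSeries.coeff_mul, PowerSeries.coeff_mul]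
  refine Finset.sum_congr rfl fun p hp => ?_
  have hp' := Finset.HasAntidiagonal.mem_antidiagonal.mp hp
  rw [← coeff_comp_eval hg (derivativeFun f) (show p.1 < m + 1 by omega)]

lemma constantCoeff_comp (f g : PowerSeries k) :
    constantCoeff (comp f g) = constantCoeff f := by
  rw [← coeff_zero_eq_constantCoeff_apply, ← coeff_zero_eq_constantCoeff_apply,
    coeff_comp]
  simp

lemma coeff_one_comp (f g : PowerSeries k) :
    coeff 1 (comp f g) = coeff 1 f * coeff 1 g := by
  rw [coeff_comp]
  rw [Finset.sum_range_succ, Finset.sum_range_one]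
  simp [PowerSeries.coeff_one]

lemma derivativeFun_C_mul_X (c : k) :
    derivativeFun (C c * X) = C c := by
  ext m
  match m with
  | 0 => simp [constantCoeff_derivativeFun', coeff_derivativeFun', coeff_C_mul, PowerSeries.coeff_X,
      PowerSeries.coeff_C]
  | (m + 1) => simp [coeff_derivativeFun', coeff_C_mul, PowerSeries.coeff_X,
      PowerSeries.coeff_C]

lemma eq_C_mul_X_of_self_eq {ψ : PowerSeries k}
    (h0 : constantCoeff ψ = 0) (h : ψ = derivativeFun ψ * X) :
    ψ = C (coeff 1 ψ) * X := by
  ext n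
  rw [coeff_C_mul, PowerSeries.coeff_X]
  match n with
  | 0 => simpa using h0
  | 1 => simp
  | (n + 2) =>
    rw [if_neg (by omega), mul_zero]
    have h1 : coeff (n + 2) ψ = coeff (n + 2) ψ * ((n : k) + 1 + 1) := by
      have := congrArg (coeff (n + 2)) h
      rwa [coeff_succ_mul_X, coeff_derivativeFun', Nat.cast_add, Nat.cast_one] at this
    have h2 : coeff (n + 2) ψ * ((n : k) + 1) = 0 := by linear_combination -h1
    rcases mul_eq_zero.mp h2 with h3 | h3
    · exact h3
    · exact absurd h3 (Nat.cast_add_one_ne_zero n)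

/-- If `T` is the normalizing transformation with `H∘T = T′·X`, then the
order-1 solutions of the Aczél–Jabotinsky equation with generator `H` are
exactly the conjugates `T∘(cX)∘T^{∘-1}` with `c ≠ 0`. -/
theorem aczel_jabotinsky_solutions_conjugates (H T Tinv : PowerSeries k)
    (hH0 : constantCoeff H = 0) (hH1 : coeff 1 H = 1)
    (hT0 : constantCoeff T = 0) (hT1 : coeff 1 T = 1)
    (hTnorm : comp H T = derivativeFun T * X)
    (hTTinv : comp T Tinv = X) (hTinvT : comp Tinv T = X)
    (Φ : PowerSeries k)
    (hΦ0 : constantCoeff Φ = 0) (hΦ1 : coeff 1 Φ ≠ 0) :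
    comp H Φ = derivativeFun Φ * H ↔
      ∃ c : k, c ≠ 0 ∧ Φ = comp (comp T (C c * X)) Tinv := by
  have hTinv0 : constantCoeff Tinv = 0 := by
    have := congrArg (constantCoeff) hTinvT
    rwa [constantCoeff_comp, constantCoeff_X] at this
  have hTinv1 : coeff 1 Tinv = 1 := by
    have := congrArg (coeff 1) hTinvT
    rwa [coeff_one_comp, hT1, mul_one, PowerSeries.coeff_X, if_pos rfl] at this
  have hcancelT : ∀ f : PowerSeries k, comp (comp f T) Tinv = f := fun f => by
    rw [comp_assoc hT0 hTinv0, hTTinv, comp_X_right]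
  have hcancelTinv : ∀ f : PowerSeries k, comp (comp f Tinv) T = f := fun f => by
    rw [comp_assoc hTinv0 hT0, hTinvT, comp_X_right]
  have hW' : derivativeFun (comp Φ T)
      = comp (derivativeFun Φ) T * derivativeFun T := derivativeFun_comp hT0 Φ
  have key : (comp H Φ = derivativeFun Φ * H)
      ↔ (comp H (comp Φ T) = derivativeFun (comp Φ T) * X) := by
    constructor
    · intro hE
      have h := congrArg (fun f => comp f T) hE
      rw [comp_assoc hΦ0 hT0, comp_mul hT0, hTnorm, ← mul_assoc, ← hW'] at h
      exact h
    · intro hF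
      have h : comp (comp H Φ) T = comp (derivativeFun Φ * H) T := by
        rw [comp_assoc hΦ0 hT0, comp_mul hT0, hTnorm, ← mul_assoc, ← hW', hF]
      have h2 := congrArg (fun f => comp f Tinv) h
      simpa only [hcancelT] using h2
  constructor
  · intro hE
    have hF := key.mp hE
    have hW0 : constantCoeff (comp Φ T) = 0 := by
      rw [constantCoeff_comp, hΦ0]
    set W := comp Φ T with hWdef
    set ψ := comp Tinv W with hψdef
    have hψ0 : constantCoeff ψ = 0 := by
      rw [hψdef, constantCoeff_comp, hTinv0]
    have hWψ : W = comp T ψ := by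
      rw [hψdef, ← comp_assoc hTinv0 hW0, hTTinv, comp_X_left hW0]
    have hA : comp H W = comp (derivativeFun T) ψ * ψ := by
      rw [hWψ, ← comp_assoc hT0 hψ0, hTnorm, comp_mul hψ0, comp_X_left hψ0]
    have hB : derivativeFun W = comp (derivativeFun T) ψ * derivativeFun ψ := by
      rw [hWψ]; exact derivativeFun_comp hψ0 T
    rw [hA, hB] at hF
    have hne : comp (derivativeFun T) ψ ≠ 0 := by
      intro h0
      have := congrArg (constantCoeff) h0
      rw [constantCoeff_comp, ← coeff_zero_eq_constantCoeff_apply,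
        coeff_derivativeFun', hT1] at this
      simp at this
    have hψeq : ψ = derivativeFun ψ * X := by
      refine mul_left_cancel₀ hne ?_
      rw [hF, mul_assoc]
    have hc := eq_C_mul_X_of_self_eq hψ0 hψeq
    refine ⟨coeff 1 ψ, ?_, ?_⟩
    · rw [hψdef, coeff_one_comp, hTinv1, one_mul, hWdef, coeff_one_comp, hT1,
        mul_one]
      exact hΦ1
    · rw [← hc, ← hWψ, hWdef]
      exact (hcancelT Φ).symm
  · rintro ⟨c, hc, rfl⟩
    have hσ0 : constantCoeff (C c * X) = 0 := by simp
    apply key.mpr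
    have hWσ : comp (comp (comp T (C c * X)) Tinv) T = comp T (C c * X) :=
      hcancelTinv (comp T (C c * X))
    rw [hWσ, ← comp_assoc hT0 hσ0, hTnorm, comp_mul hσ0, comp_X_left hσ0,
      derivativeFun_comp hσ0 T, derivativeFun_C_mul_X, mul_assoc]
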